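/- For two independent Laplace random variables X, Y ∼ Lap(1/γ) and a real number Δ ≥ 0, the probability that Y − X > Δ is at most (2 + γΔ)/(4·exp(γΔ)). -/

import Mathlib

open MeasureTheory ProbabilityTheory Set Real

/-- The density of the Laplace distribution `Lap(1/γ)`: `(γ/2) exp(-γ|x|)`. -/
noncomputable def laplacePDF (γ x : ℝ) : ℝ := (γ / 2) * Real.exp (-γ * |x|)

lemma intExpNegIoi {b : ℝ} (hb : 0 < b) (a : ℝ) :
    ∫ x in Ioi a, Real.exp (-(b*x)) = Real.exp (-(b*a))/b := by
  have h := MeasureTheory.integral_comp_mul_left_Ioi (fun x => Real.exp (-x)) a hb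
  simp only [integral_exp_neg_Ioi, smul_eq_mul] at h
  rw [h]; ring

lemma intExpIic {b : ℝ} (hb : 0 < b) (a : ℝ) :
    ∫ x in Iic a, Real.exp (b*x) = Real.exp (b*a)/b := by
  have h := integral_comp_neg_Iic a (fun x => Real.exp (-(b*x)))
  simp only [mul_neg, neg_neg] at h
  rw [h, intExpNegIoi hb]
  simp [neg_mul]

lemma integrableExpIic {b : ℝ} (hb : 0 < b) (a : ℝ) :
    IntegrableOn (fun x => Real.exp (b*x)) (Iic a) := by
  have A : MeasurableEmbedding (fun x : ℝ => -x) :=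
    (Homeomorph.neg ℝ).isClosedEmbedding.measurableEmbedding
  have h1 : volume.restrict (Iic a) =
      ((volume : Measure ℝ).restrict (Ici (-a))).map (fun x => -x) := by
    rw [← Measure.map_neg_eq_self (volume : Measure ℝ)]
    rw [Measure.restrict_map measurable_neg measurableSet_Iic]
    congr 1
    · ext x; simp [neg_le]
  rw [IntegrableOn, h1, A.integrable_map_iff]
  have := (exp_neg_integrableOn_Ioi (-a) hb).congr_set_ae Ioi_ae_eq_Ici.symm
  exact this.congr_fun (by intro x _; simp [mul_comm]) measurableSet_Ici |>.mono_set (by rfl)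

/-- the complementary CDF of Laplace -/
noncomputable def lapTail (γ t : ℝ) : ℝ :=
  if 0 ≤ t then Real.exp (-(γ*t))/2 else 1 - Real.exp (γ*t)/2

lemma lapPDF_nonneg {γ : ℝ} (hγ : 0 < γ) (x : ℝ) : 0 ≤ laplacePDF γ x := by
  unfold laplacePDF; positivity

lemma lapPDF_meas (γ : ℝ) : Measurable (laplacePDF γ) := by
  unfold laplacePDF; fun_prop

lemma lapTail_nonneg {γ : ℝ} (hγ : 0 < γ) (t : ℝ) : 0 ≤ lapTail γ t := by
  unfold lapTail
  split_ifs with h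
  · positivity
  · push_neg at h
    nlinarith [Real.exp_le_one_iff.mpr (by nlinarith : γ * t ≤ 0)]

lemma lapTail_le_one {γ : ℝ} (hγ : 0 < γ) (t : ℝ) : lapTail γ t ≤ 1 := by
  unfold lapTail
  split_ifs with h
  · nlinarith [Real.exp_le_one_iff.mpr (by nlinarith : -(γ * t) ≤ 0)]
  · nlinarith [Real.exp_pos (γ*t)]

lemma lapTail_meas (γ : ℝ) : Measurable (lapTail γ) := by
  unfold lapTail
  exact Measurable.ite (measurableSet_Ici) (by fun_prop) (by fun_prop)

lemma lapPDF_intOn_Iic {γ : ℝ} (hγ : 0 < γ) (a : ℝ) (ha : a ≤ 0) :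
    IntegrableOn (laplacePDF γ) (Iic a) := by
  have h0 : IntegrableOn (fun x => (γ/2) * Real.exp (γ*x)) (Iic a) :=
    (integrableExpIic hγ a).const_mul (γ/2)
  refine h0.congr_fun ?_ measurableSet_Iic
  intro x hx
  simp only [Iic, mem_setOf_eq] at hx
  unfold laplacePDF
  rw [abs_of_nonpos (hx.trans ha)]
  ring_nf

lemma lapPDF_intOn_Ioi_nonneg {γ : ℝ} (hγ : 0 < γ) (a : ℝ) (ha : 0 ≤ a) :
    IntegrableOn (laplacePDF γ) (Ioi a) := by
  have h0 : IntegrableOn (fun x => (γ/2) * Real.exp (-γ*x)) (Ioi a) :=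
    (exp_neg_integrableOn_Ioi a hγ).const_mul (γ/2)
  refine h0.congr_fun ?_ measurableSet_Ioi
  intro x hx
  unfold laplacePDF
  rw [abs_of_nonneg (ha.trans (le_of_lt hx))]

lemma lapPDF_integrable {γ : ℝ} (hγ : 0 < γ) : Integrable (laplacePDF γ) := by
  rw [← integrableOn_univ, ← Iic_union_Ioi (a := (0:ℝ)), integrableOn_union]
  exact ⟨lapPDF_intOn_Iic hγ 0 le_rfl, lapPDF_intOn_Ioi_nonneg hγ 0 le_rfl⟩

lemma lapPDF_intOn (γ : ℝ) (hγ : 0 < γ) (s : Set ℝ) : IntegrableOn (laplacePDF γ) s :=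
  (lapPDF_integrable hγ).integrableOn

lemma lap_tail_integral {γ : ℝ} (hγ : 0 < γ) (t : ℝ) :
    ∫ x in Ioi t, laplacePDF γ x = lapTail γ t := by
  rcases le_or_gt 0 t with ht | ht
  · rw [setIntegral_congr_fun measurableSet_Ioi
      (g := fun x => (γ/2) * Real.exp (-(γ*x)))
      (fun x hx => by
        unfold laplacePDF
        rw [abs_of_nonneg (ht.trans (le_of_lt hx))]; ring_nf),
      integral_const_mul, intExpNegIoi hγ, lapTail, if_pos ht]
    field_simp
  · have hsplit : Ioc t 0 ∪ Ioi (0:ℝ) = Ioi t := Ioc_union_Ioi_eq_Ioi ht.le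
    rw [← hsplit, setIntegral_union (Ioc_disjoint_Ioi le_rfl) measurableSet_Ioi
        (lapPDF_intOn γ hγ _) (lapPDF_intOn γ hγ _)]
    have h1 : ∫ x in Ioc t 0, laplacePDF γ x = (1 - Real.exp (γ*t))/2 := by
      rw [setIntegral_congr_fun measurableSet_Ioc
        (g := fun x => (γ/2) * Real.exp (γ*x))
        (fun x hx => by
          unfold laplacePDF
          rw [abs_of_nonpos hx.2]; ring_nf)]
      have hIic : Iic t ∪ Ioc t 0 = Iic (0:ℝ) := Iic_union_Ioc_eq_Iic ht.le
      have hint1 : IntegrableOn (fun x => (γ/2) * Real.exp (γ*x)) (Iic t) :=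
        (integrableExpIic hγ t).const_mul _
      have hint2' : IntegrableOn (fun x => (γ/2) * Real.exp (γ*x)) (Iic 0) :=
        (integrableExpIic hγ 0).const_mul _
      have hint2 : IntegrableOn (fun x => (γ/2) * Real.exp (γ*x)) (Ioc t 0) :=
        hint2'.mono_set (fun x hx => hx.2)
      have := setIntegral_union (Iic_disjoint_Ioc le_rfl) measurableSet_Ioc hint1 hint2
      rw [hIic] at this
      have key : (∫ x in Ioc t 0, (γ/2) * Real.exp (γ*x)) =
          (∫ x in Iic (0:ℝ), (γ/2) * Real.exp (γ*x)) - ∫ x in Iic t, (γ/2) * Real.exp (γ*x) := by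
        linarith [this]
      rw [key, integral_const_mul, integral_const_mul, intExpIic hγ, intExpIic hγ]
      field_simp
      rw [mul_zero, Real.exp_zero]
    have h2 : ∫ x in Ioi (0:ℝ), laplacePDF γ x = 1/2 := by
      rw [setIntegral_congr_fun measurableSet_Ioi
        (g := fun x => (γ/2) * Real.exp (-(γ*x)))
        (fun x hx => by
          unfold laplacePDF
          rw [abs_of_nonneg hx.le]; ring_nf),
        integral_const_mul, intExpNegIoi hγ]
      simp
      field_simp
    rw [h1, h2, lapTail, if_neg (not_le.mpr ht)]
    ring

lemma lapMeasure_Ioi {γ : ℝ} (hγ : 0 < γ) (t : ℝ) :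
    (volume.withDensity (fun x => ENNReal.ofReal (laplacePDF γ x))) (Ioi t)
      = ENNReal.ofReal (lapTail γ t) := by
  rw [withDensity_apply _ measurableSet_Ioi,
    ← ofReal_integral_eq_lintegral_ofReal (lapPDF_intOn γ hγ _)
      (Filter.Eventually.of_forall fun x => lapPDF_nonneg hγ x),
    lap_tail_integral hγ]

lemma g_integrable {γ Δ : ℝ} (hγ : 0 < γ) :
    Integrable (fun x => laplacePDF γ x * lapTail γ (x + Δ)) := by
  refine (lapPDF_integrable hγ).mono
    (((lapPDF_meas γ).mul ((lapTail_meas γ).comp (measurable_id.add_const Δ))).aestronglyMeasurable)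
    (Filter.Eventually.of_forall fun x => ?_)
  rw [Real.norm_eq_abs, Real.norm_eq_abs, abs_of_nonneg (lapPDF_nonneg hγ x),
    abs_of_nonneg (mul_nonneg (lapPDF_nonneg hγ x) (lapTail_nonneg hγ _))]
  nlinarith [lapTail_le_one hγ (x+Δ), lapTail_nonneg hγ (x+Δ), lapPDF_nonneg hγ x]

lemma main_integral {γ Δ : ℝ} (hγ : 0 < γ) (hΔ : 0 ≤ Δ) :
    ∫ x, laplacePDF γ x * lapTail γ (x + Δ) = (2 + γ * Δ) / (4 * Real.exp (γ * Δ)) := by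
  have hgInt := g_integrable (γ := γ) (Δ := Δ) hγ
  have h2γ : (0:ℝ) < 2*γ := by positivity
  rw [← intervalIntegral.integral_Iic_add_Ioi (b := -Δ) hgInt.integrableOn hgInt.integrableOn]
  have hIoi : Ioc (-Δ) 0 ∪ Ioi 0 = Ioi (-Δ) := Ioc_union_Ioi_eq_Ioi (neg_nonpos.mpr hΔ)
  rw [← hIoi, setIntegral_union (Ioc_disjoint_Ioi le_rfl) measurableSet_Ioi
      hgInt.integrableOn hgInt.integrableOn]
  have P1 : ∫ x in Iic (-Δ), laplacePDF γ x * lapTail γ (x + Δ)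
      = 3/8 * Real.exp (-(γ*Δ)) := by
    rw [setIntegral_congr_fun measurableSet_Iic
      (g := fun x => (γ/2) * Real.exp (γ*x) - ((γ/4) * Real.exp (γ*Δ)) * Real.exp ((2*γ)*x))
      (fun x hx => by
        simp only [Iic, mem_setOf_eq] at hx
        have hx0 : x ≤ 0 := hx.trans (neg_nonpos.mpr hΔ)
        have e1 : Real.exp (γ*x) * Real.exp (γ*(x+Δ)) = Real.exp (γ*Δ) * Real.exp ((2*γ)*x) := by
          rw [← Real.exp_add, ← Real.exp_add]; congr 1; ring
        unfold laplacePDF lapTail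
        rw [abs_of_nonpos hx0]
        split_ifs with h
        · have hxe : x + Δ = 0 := le_antisymm (by linarith) h
          have e2 : Real.exp (γ*(x+Δ)) = 1 := by rw [hxe, mul_zero, Real.exp_zero]
          have e3 : Real.exp (-(γ*(x+Δ))) = 1 := by rw [hxe, mul_zero, neg_zero, Real.exp_zero]
          simp only [show -γ * -x = γ*x from by ring]
          linear_combination (γ/4) * Real.exp (γ*x) * e3 + (γ/4) * Real.exp (γ*x) * e2
            - (γ/4) * e1
        · simp only [show -γ * -x = γ*x from by ring]
          linear_combination (-(γ/4)) * e1)]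
    rw [integral_sub ((integrableExpIic hγ _).const_mul _) ((integrableExpIic h2γ _).const_mul _),
      integral_const_mul, integral_const_mul, intExpIic hγ, intExpIic h2γ]
    have eA : Real.exp (γ*(-Δ)) = Real.exp (-(γ*Δ)) := by congr 1; ring
    have eB2 : Real.exp (γ*Δ) * Real.exp (-(2*γ*Δ)) = Real.exp (-(γ*Δ)) := by
      rw [← Real.exp_add]; congr 1; ring
    rw [eA]
    field_simp
    have eB3 : Real.exp (γ*Δ) * Real.exp (-(γ*2*Δ)) = Real.exp (-(γ*Δ)) := by
      rw [← Real.exp_add]; congr 1; ring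
    linear_combination (-8) * eB3
  have P2 : ∫ x in Ioc (-Δ) 0, laplacePDF γ x * lapTail γ (x + Δ)
      = Δ * ((γ/4) * Real.exp (-(γ*Δ))) := by
    rw [setIntegral_congr_fun measurableSet_Ioc
      (g := fun _ => (γ/4) * Real.exp (-(γ*Δ)))
      (fun x hx => by
        have e1 : Real.exp (γ*x) * Real.exp (-(γ*(x+Δ))) = Real.exp (-(γ*Δ)) := by
          rw [← Real.exp_add]; congr 1; ring
        unfold laplacePDF lapTail
        rw [abs_of_nonpos hx.2, if_pos (by linarith [hx.1] : (0:ℝ) ≤ x + Δ)]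
        simp only [show -γ * -x = γ*x from by ring]
        linear_combination (γ/4) * e1)]
    rw [setIntegral_const]
    simp [Real.volume_Ioc, ENNReal.toReal_ofReal hΔ, hΔ]
  have P3 : ∫ x in Ioi (0:ℝ), laplacePDF γ x * lapTail γ (x + Δ)
      = 1/8 * Real.exp (-(γ*Δ)) := by
    rw [setIntegral_congr_fun measurableSet_Ioi
      (g := fun x => ((γ/4) * Real.exp (-(γ*Δ))) * Real.exp (-((2*γ)*x)))
      (fun x hx => by
        have hx0 : (0:ℝ) ≤ x := (mem_Ioi.mp hx).le
        have e1 : Real.exp (-(γ*x)) * Real.exp (-(γ*(x+Δ)))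
            = Real.exp (-(γ*Δ)) * Real.exp (-((2*γ)*x)) := by
          rw [← Real.exp_add, ← Real.exp_add]; congr 1; ring
        unfold laplacePDF lapTail
        rw [abs_of_nonneg hx0, if_pos (by linarith : (0:ℝ) ≤ x + Δ)]
        simp only [show -γ * x = -(γ*x) from by ring]
        linear_combination (γ/4) * e1)]
    rw [integral_const_mul, intExpNegIoi h2γ]
    rw [mul_zero, neg_zero, Real.exp_zero]
    field_simp
    ring
  rw [P1, P2, P3, Real.exp_neg]
  rw [eq_div_iff (by positivity)]
  field_simp
  ring

/-- For two independent Laplace random variables `X, Y ∼ Lap(1/γ)` and `Δ ≥ 0`,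
the probability that `Y - X > Δ` is at most `(2 + γΔ)/(4 exp(γΔ))`. -/
theorem stmt_3 {A : Type*} [MeasurableSpace A] (μ : Measure A) [IsProbabilityMeasure μ]
    (γ Δ : ℝ) (hγ : 0 < γ) (hΔ : 0 ≤ Δ)
    (X Y : A → ℝ) (hX : Measurable X) (hY : Measurable Y)
    (hXlaw : μ.map X = volume.withDensity (fun x => ENNReal.ofReal (laplacePDF γ x)))
    (hYlaw : μ.map Y = volume.withDensity (fun x => ENNReal.ofReal (laplacePDF γ x)))
    (hindep : IndepFun X Y μ) :
    μ {a | Y a - X a > Δ} ≤ ENNReal.ofReal ((2 + γ * Δ) / (4 * Real.exp (γ * Δ))) := by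
  set ν : Measure ℝ := volume.withDensity (fun x => ENNReal.ofReal (laplacePDF γ x)) with hν
  have hFm : Measurable (fun x => ENNReal.ofReal (laplacePDF γ x)) :=
    (lapPDF_meas γ).ennreal_ofReal
  have hg : Measurable (fun x : ℝ => ENNReal.ofReal (lapTail γ (x + Δ))) :=
    ((lapTail_meas γ).comp (measurable_add_const Δ)).ennreal_ofReal
  have hprod : μ.map (fun a => (X a, Y a)) = ν.prod ν := by
    have h := (indepFun_iff_map_prod_eq_prod_map_map hX.aemeasurable hY.aemeasurable).mp hindep
    rw [hXlaw, hYlaw] at h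
    exact h
  have hset : MeasurableSet {p : ℝ × ℝ | p.2 - p.1 > Δ} :=
    measurableSet_lt measurable_const (measurable_snd.sub measurable_fst)
  have step1 : μ {a | Y a - X a > Δ} = (ν.prod ν) {p : ℝ × ℝ | p.2 - p.1 > Δ} := by
    rw [← hprod, Measure.map_apply (hX.prodMk hY) hset]
    rfl
  have step2 : (ν.prod ν) {p : ℝ × ℝ | p.2 - p.1 > Δ} = ∫⁻ x, ν (Ioi (x + Δ)) ∂ν := by
    rw [Measure.prod_apply hset]
    refine lintegral_congr fun x => ?_
    congr 1
    ext y
    simp only [mem_preimage, mem_setOf_eq, mem_Ioi]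
    constructor <;> intro h <;> [linarith; linarith]
  have step3 : ∫⁻ x, ν (Ioi (x + Δ)) ∂ν
      = ∫⁻ x, ENNReal.ofReal (laplacePDF γ x * lapTail γ (x + Δ)) ∂volume := by
    calc ∫⁻ x, ν (Ioi (x + Δ)) ∂ν
        = ∫⁻ x, ENNReal.ofReal (lapTail γ (x + Δ)) ∂ν :=
          lintegral_congr fun x => lapMeasure_Ioi hγ _
      _ = ∫⁻ x, ((fun x => ENNReal.ofReal (laplacePDF γ x)) * (fun x => ENNReal.ofReal (lapTail γ (x + Δ)))) x ∂volume :=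
          lintegral_withDensity_eq_lintegral_mul volume hFm hg
      _ = ∫⁻ x, ENNReal.ofReal (laplacePDF γ x * lapTail γ (x + Δ)) ∂volume := by
          refine lintegral_congr fun x => ?_
          simp only [Pi.mul_apply]
          rw [ENNReal.ofReal_mul (lapPDF_nonneg hγ x)]
  have step4 : ∫⁻ x, ENNReal.ofReal (laplacePDF γ x * lapTail γ (x + Δ)) ∂volume
      = ENNReal.ofReal (∫ x, laplacePDF γ x * lapTail γ (x + Δ)) :=
    (ofReal_integral_eq_lintegral_ofReal (g_integrable hγ)
      (Filter.Eventually.of_forall fun x =>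
        mul_nonneg (lapPDF_nonneg hγ x) (lapTail_nonneg hγ _))).symm
  rw [step1, step2, step3, step4, main_integral hγ hΔ]
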